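/- Let r ≥ 1 and let the eight paths in Z_{16r} given by P_i: 0, 9+8i, 4 and P_i': 0, 11+8i, 4 for 0 ≤ i ≤ r−2, together with P'': 0, 8r−3, −4, be given. For each such path Q of length 2 ending at ±4, the union Q ∪ ρ^4(Q) ∪ ρ^8(Q) ∪ ... ∪ ρ^{16r−4}(Q) is a single cycle of length 8r in Z_{16r}, where ρ is translation by 1. -/

import Mathlib

lemma stmt18_aux (r : ℕ) (hr : 1 ≤ r) (v1 v2 : ℤ) (hodd : v1 % 2 = 1)
    (he : v2 = 4 ∨ v2 = -4) :
    Function.Injective (fun j : Fin (8 * r) =>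
      (((if (j : ℕ) % 2 = 0 then (((j : ℕ) / 2 : ℕ) : ℤ) * v2
         else (((j : ℕ) / 2 : ℕ) : ℤ) * v2 + v1) : ℤ) : ZMod (16 * r))) ∧
    (((4 * (r : ℤ) * v2 : ℤ) : ZMod (16 * r)) = 0) := by
  constructor
  · intro j k h
    simp only at h
    have hj := j.isLt
    have hk := k.isLt
    rw [ZMod.intCast_eq_intCast_iff] at h
    have hd := Int.ModEq.dvd h
    push_cast at hd
    have habs : |((k : ℕ) / 2 : ℤ) - ((j : ℕ) / 2 : ℤ)| < 4 * (r : ℤ) := by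
      rw [abs_lt]; constructor <;> omega
    by_cases hje : (j : ℕ) % 2 = 0 <;> by_cases hke : (k : ℕ) % 2 = 0 <;>
        simp only [hje, hke, if_pos, if_neg, if_true, if_false] at hd
    · -- both even
      rcases he with rfl | rfl
      · have h4 : (4 * (r : ℤ)) ∣ (((k : ℕ) / 2 : ℤ) - ((j : ℕ) / 2 : ℤ)) := by
          have : (4 * (r : ℤ)) * 4 ∣ (((k : ℕ) / 2 : ℤ) - ((j : ℕ) / 2 : ℤ)) * 4 := by
            convert hd using 1 <;> ring
          exact (mul_dvd_mul_iff_right (by norm_num : (4:ℤ) ≠ 0)).mp this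
        have := Int.eq_zero_of_abs_lt_dvd h4 habs
        exact Fin.ext (by omega)
      · have h4 : (4 * (r : ℤ)) ∣ (((k : ℕ) / 2 : ℤ) - ((j : ℕ) / 2 : ℤ)) := by
          have : (4 * (r : ℤ)) * (-4) ∣ (((k : ℕ) / 2 : ℤ) - ((j : ℕ) / 2 : ℤ)) * (-4) := by
            rw [show (4 * (r : ℤ)) * (-4) = -(16 * (r : ℤ)) by ring, neg_dvd]
            convert hd using 1; rfl; ring
          exact (mul_dvd_mul_iff_right (by norm_num : (-4:ℤ) ≠ 0)).mp this
        have := Int.eq_zero_of_abs_lt_dvd h4 habs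
        exact Fin.ext (by omega)
    · -- j even, k odd : contradiction by parity
      have h2 : (2:ℤ) ∣ (((k : ℕ) / 2 : ℤ) * v2 + v1 - ((j : ℕ) / 2 : ℤ) * v2) :=
        dvd_trans ⟨8 * (r : ℤ), by ring⟩ hd
      obtain ⟨c, hc⟩ := h2
      rcases he with rfl | rfl <;> exact Fin.ext (by omega)
    · -- j odd, k even
      have h2 : (2:ℤ) ∣ (((k : ℕ) / 2 : ℤ) * v2 - (((j : ℕ) / 2 : ℤ) * v2 + v1)) :=
        dvd_trans ⟨8 * (r : ℤ), by ring⟩ hd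
      obtain ⟨c, hc⟩ := h2
      rcases he with rfl | rfl <;> exact Fin.ext (by omega)
    · -- both odd
      rcases he with rfl | rfl
      · have h4 : (4 * (r : ℤ)) ∣ (((k : ℕ) / 2 : ℤ) - ((j : ℕ) / 2 : ℤ)) := by
          have : (4 * (r : ℤ)) * 4 ∣ (((k : ℕ) / 2 : ℤ) - ((j : ℕ) / 2 : ℤ)) * 4 := by
            convert hd using 1 <;> ring
          exact (mul_dvd_mul_iff_right (by norm_num : (4:ℤ) ≠ 0)).mp this
        have := Int.eq_zero_of_abs_lt_dvd h4 habs
        exact Fin.ext (by omega)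
      · have h4 : (4 * (r : ℤ)) ∣ (((k : ℕ) / 2 : ℤ) - ((j : ℕ) / 2 : ℤ)) := by
          have : (4 * (r : ℤ)) * (-4) ∣ (((k : ℕ) / 2 : ℤ) - ((j : ℕ) / 2 : ℤ)) * (-4) := by
            rw [show (4 * (r : ℤ)) * (-4) = -(16 * (r : ℤ)) by ring, neg_dvd]
            convert hd using 1; rfl; ring
          exact (mul_dvd_mul_iff_right (by norm_num : (-4:ℤ) ≠ 0)).mp this
        have := Int.eq_zero_of_abs_lt_dvd h4 habs
        exact Fin.ext (by omega)
  · rw [ZMod.intCast_zmod_eq_zero_iff_dvd]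
    rcases he with rfl | rfl
    · exact ⟨1, by push_cast; ring⟩
    · exact ⟨-1, by push_cast; ring⟩

/-- Let `r ≥ 1`. For each of the paths `P_i : 0, 9+8i, 4` and `P_i' : 0, 11+8i, 4`
(`0 ≤ i ≤ r-2`) and `P'' : 0, 8r-3, -4` in `Z_{16r}`, the union
`Q ∪ ρ⁴(Q) ∪ ρ⁸(Q) ∪ … ∪ ρ^{16r-4}(Q)` is a single cycle of length `8r`: its `8r`
vertices `(j/2)·v₂` (`j` even) and `(j/2)·v₂ + v₁` (`j` odd) are pairwise distinct in
`Z_{16r}`, and the walk closes up since `4r·v₂ = 0` in `Z_{16r}`. -/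
theorem stmt18 (r : ℕ) (hr : 1 ≤ r) (v1 v2 : ℤ)
    (hQ : (∃ i : ℕ, i + 2 ≤ r ∧ v1 = 9 + 8 * i ∧ v2 = 4) ∨
          (∃ i : ℕ, i + 2 ≤ r ∧ v1 = 11 + 8 * i ∧ v2 = 4) ∨
          (v1 = 8 * (r : ℤ) - 3 ∧ v2 = -4)) :
    Function.Injective (fun j : Fin (8 * r) =>
      (((if (j : ℕ) % 2 = 0 then (((j : ℕ) / 2 : ℕ) : ℤ) * v2
         else (((j : ℕ) / 2 : ℕ) : ℤ) * v2 + v1) : ℤ) : ZMod (16 * r))) ∧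
    (((4 * (r : ℤ) * v2 : ℤ) : ZMod (16 * r)) = 0) := by
  apply stmt18_aux r hr
  · rcases hQ with ⟨i, hi, rfl, rfl⟩ | ⟨i, hi, rfl, rfl⟩ | ⟨rfl, rfl⟩ <;> omega
  · rcases hQ with ⟨i, hi, rfl, rfl⟩ | ⟨i, hi, rfl, rfl⟩ | ⟨rfl, rfl⟩ <;> simp
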